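/- Let n ≥ 2, 0 < λ ≤ Λ, M₁ > 0, M₂ ≥ 0, κ ≥ 0, let z ∈ ℝⁿ \ {0} with s := |z| and ẑ := z/s, let υ' (s), υ''(s) ∈ ℝ, and set A := M₁ [ (υ'(s)/s) I + (υ''(s) − υ'(s)/s) ẑ ⊗ ẑ ] ∈ Sym(n). Suppose X, Y ∈ Sym(n) satisfy, for all v, w ∈ ℝⁿ, ⟨Xv, v⟩ − ⟨Yw, w⟩ ≤ ⟨A(v − w), v − w⟩ + (2M₂ + κ)(|v|² + |w|²). Then: (i) every eigenvalue of X − Y is at most 4M₂ + 2κ; (ii) ⟨(X − Y)ẑ, ẑ⟩ ≤ 4M₁υ''(s) + 4M₂ + 2κ, so the smallest eigenvalue of X − Y is at most 4M₁υ''(s) + 4M₂ + 2κ; (iii) if in addition 4M₁υ''(s) + 4M₂ + 2κ ≤ 0, then P⁺_{λ,Λ}(X − Y) ≤ 2(λ + Λ(n − 1))(2M₂ + κ) + 4λM₁υ''(s). -/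

import Mathlib

open Real Set Metric
open scoped RealInnerProductSpace

/-- The operator (ℓ²→ℓ²) norm of a real `n × n` matrix. -/
noncomputable def matOpNorm {n : ℕ} (N : Matrix (Fin n) (Fin n) ℝ) : ℝ :=
  ‖Matrix.toEuclideanCLM (𝕜 := ℝ) N‖

/-- `F` is continuous, `F 0 = 0`, and `F` is uniformly `(lam, Lam)`-elliptic:
`lam‖N‖ ≤ F(M+N) - F(M) ≤ Lam‖N‖` for all symmetric `M, N` with `N` positive semidefinite. -/
def UniformlyElliptic {n : ℕ} (lam Lam : ℝ) (F : Matrix (Fin n) (Fin n) ℝ → ℝ) : Prop :=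
  Continuous F ∧ F 0 = 0 ∧
    ∀ M N : Matrix (Fin n) (Fin n) ℝ, M.IsSymm → N.IsSymm → N.PosSemidef →
      lam * matOpNorm N ≤ F (M + N) - F M ∧ F (M + N) - F M ≤ Lam * matOpNorm N

/-- The Hessian matrix of `φ` at `x`, given by the second iterated Fréchet derivative. -/
noncomputable def hessianMatrix {n : ℕ} (φ : EuclideanSpace ℝ (Fin n) → ℝ)
    (x : EuclideanSpace ℝ (Fin n)) : Matrix (Fin n) (Fin n) ℝ :=
  fun i j => iteratedFDeriv ℝ 2 φ x ![EuclideanSpace.single i 1, EuclideanSpace.single j 1]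

/-- Viscosity supersolution of `[|Du+ξ|^{p(x)} + a(x)|Du+ξ|^{q(x)}] F(D²u) = f(x)` on `Ω`:
whenever a `C²` function `φ` is such that `u - φ` has a local minimum at `x₀ ∈ Ω`,
`[|Dφ(x₀)+ξ|^{p(x₀)} + a(x₀)|Dφ(x₀)+ξ|^{q(x₀)}] F(D²φ(x₀)) ≤ f(x₀)`. -/
def IsViscositySupersol {n : ℕ} (Ω : Set (EuclideanSpace ℝ (Fin n)))
    (p q a f : EuclideanSpace ℝ (Fin n) → ℝ) (ξ : EuclideanSpace ℝ (Fin n))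
    (F : Matrix (Fin n) (Fin n) ℝ → ℝ) (u : EuclideanSpace ℝ (Fin n) → ℝ) : Prop :=
  ∀ x₀ ∈ Ω, ∀ φ : EuclideanSpace ℝ (Fin n) → ℝ, ContDiff ℝ 2 φ →
    IsLocalMin (fun x => u x - φ x) x₀ →
    (‖gradient φ x₀ + ξ‖ ^ (p x₀) + a x₀ * ‖gradient φ x₀ + ξ‖ ^ (q x₀)) *
      F (hessianMatrix φ x₀) ≤ f x₀

/-- Viscosity subsolution of `[|Du+ξ|^{p(x)} + a(x)|Du+ξ|^{q(x)}] F(D²u) = f(x)` on `Ω`. -/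
def IsViscositySubsol {n : ℕ} (Ω : Set (EuclideanSpace ℝ (Fin n)))
    (p q a f : EuclideanSpace ℝ (Fin n) → ℝ) (ξ : EuclideanSpace ℝ (Fin n))
    (F : Matrix (Fin n) (Fin n) ℝ → ℝ) (u : EuclideanSpace ℝ (Fin n) → ℝ) : Prop :=
  ∀ x₀ ∈ Ω, ∀ φ : EuclideanSpace ℝ (Fin n) → ℝ, ContDiff ℝ 2 φ →
    IsLocalMax (fun x => u x - φ x) x₀ →
    f x₀ ≤ (‖gradient φ x₀ + ξ‖ ^ (p x₀) + a x₀ * ‖gradient φ x₀ + ξ‖ ^ (q x₀)) *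
      F (hessianMatrix φ x₀)

/-- Viscosity solution: both a viscosity supersolution and a viscosity subsolution. -/
def IsViscositySol {n : ℕ} (Ω : Set (EuclideanSpace ℝ (Fin n)))
    (p q a f : EuclideanSpace ℝ (Fin n) → ℝ) (ξ : EuclideanSpace ℝ (Fin n))
    (F : Matrix (Fin n) (Fin n) ℝ → ℝ) (u : EuclideanSpace ℝ (Fin n) → ℝ) : Prop :=
  IsViscositySupersol Ω p q a f ξ F u ∧ IsViscositySubsol Ω p q a f ξ F u

/-- The Pucci maximal operator `P⁺_{λ,Λ}(M) = Λ Σ_{λ̄ᵢ>0} λ̄ᵢ + λ Σ_{λ̄ᵢ<0} λ̄ᵢ`. -/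
noncomputable def pucciPlus {n : ℕ} (lam Lam : ℝ) (N : Matrix (Fin n) (Fin n) ℝ)
    (hN : N.IsHermitian) : ℝ :=
  Lam * ∑ i, max (hN.eigenvalues i) 0 + lam * ∑ i, min (hN.eigenvalues i) 0

section AuxIL
open Matrix

lemma vecMulVec_mulVec' {n : ℕ} (u v w : Fin n → ℝ) :
    Matrix.vecMulVec u v *ᵥ w = (v ⬝ᵥ w) • u := by
  funext i
  simp [Matrix.mulVec, Matrix.vecMulVec_apply, dotProduct, Finset.sum_mul,
    Finset.mul_sum, mul_comm, mul_assoc, mul_left_comm]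

lemma rayleigh_eigen_le {n : ℕ} [NeZero n] (B : Matrix (Fin n) (Fin n) ℝ)
    (hB : B.IsHermitian) (x : Fin n → ℝ) (hx : x ⬝ᵥ x = 1) :
    ∃ i, hB.eigenvalues i ≤ (B *ᵥ x) ⬝ᵥ x := by
  classical
  set U : Matrix (Fin n) (Fin n) ℝ := (hB.eigenvectorUnitary : Matrix (Fin n) (Fin n) ℝ) with hU
  set c : Fin n → ℝ := star U *ᵥ x with hc
  have hUc : U * star U = 1 := Matrix.mem_unitaryGroup_iff.mp hB.eigenvectorUnitary.2
  have hstar : star U = Uᵀ := U.conjTranspose_eq_transpose_of_trivial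
  have hdotU : ∀ y : Fin n → ℝ, (U *ᵥ y) ⬝ᵥ x = y ⬝ᵥ c := by
    intro y
    rw [dotProduct_comm, Matrix.dotProduct_mulVec, hc, hstar, Matrix.mulVec_transpose,
      dotProduct_comm]
  have hcc : c ⬝ᵥ c = 1 := by
    have h1 : c ⬝ᵥ c = (U *ᵥ c) ⬝ᵥ x := (hdotU c).symm
    rw [h1, hc, Matrix.mulVec_mulVec, hUc, Matrix.one_mulVec, hx]
  have hray : (B *ᵥ x) ⬝ᵥ x = ∑ i, hB.eigenvalues i * (c i)^2 := by
    conv_lhs => rw [hB.spectral_theorem]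
    rw [Unitary.conjStarAlgAut_apply, ← Matrix.mulVec_mulVec, ← Matrix.mulVec_mulVec, hdotU, ← hc]
    simp [Matrix.mulVec_diagonal, dotProduct, sq, mul_assoc]
  obtain ⟨i₀, -, hmin⟩ := Finset.exists_min_image Finset.univ hB.eigenvalues ⟨(0 : Fin n), Finset.mem_univ _⟩
  refine ⟨i₀, ?_⟩
  have : hB.eigenvalues i₀ = ∑ i, hB.eigenvalues i₀ * (c i)^2 := by
    rw [← Finset.mul_sum]
    have : ∑ i, (c i)^2 = 1 := by simpa [dotProduct, sq] using hcc
    rw [this, mul_one]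
  rw [hray, this]
  exact Finset.sum_le_sum fun i _ => mul_le_mul_of_nonneg_right (hmin i (Finset.mem_univ _)) (sq_nonneg _)


lemma eigen_rayleigh {n : ℕ} (B : Matrix (Fin n) (Fin n) ℝ) (hB : B.IsHermitian) (i : Fin n) :
    ∃ v : Fin n → ℝ, v ⬝ᵥ v = 1 ∧ hB.eigenvalues i = (B *ᵥ v) ⬝ᵥ v := by
  refine ⟨⇑(hB.eigenvectorBasis i), ?_, ?_⟩
  · have hnorm := hB.eigenvectorBasis.orthonormal.1 i
    have : (⇑(hB.eigenvectorBasis i) : Fin n → ℝ) ⬝ᵥ ⇑(hB.eigenvectorBasis i) =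
        ‖hB.eigenvectorBasis i‖ ^ 2 := by
      rw [EuclideanSpace.norm_eq, Real.sq_sqrt (by positivity)]
      simp [dotProduct, sq, Real.norm_eq_abs, abs_mul_abs_self]
    rw [this, hnorm, one_pow]
  · have := hB.eigenvalues_eq i
    simpa [dotProduct_comm] using this

end AuxIL

open Matrix in
/-- **Matrix inequalities from the Ishii–Lions lemma (proof of Lemma 4.1).**
If `X, Y` satisfy `⟨Xv,v⟩ − ⟨Yw,w⟩ ≤ ⟨A(v−w), v−w⟩ + (2M₂+κ)(|v|²+|w|²)` with
`A = M₁[(υ'(s)/s)I + (υ''(s) − υ'(s)/s) ẑ⊗ẑ]`, then every eigenvalue of `X − Y` is at most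
`4M₂ + 2κ`, the smallest eigenvalue of `X − Y` is at most `4M₁υ''(s) + 4M₂ + 2κ`, and if
this last quantity is nonpositive then
`P⁺_{λ,Λ}(X−Y) ≤ 2(λ + Λ(n−1))(2M₂+κ) + 4λM₁υ''(s)`. -/
theorem ishii_lions_matrix_inequalities
    (n : ℕ) (hn : 2 ≤ n) (lam Lam : ℝ) (hlam : 0 < lam) (hlamLam : lam ≤ Lam)
    (M₁ M₂ κ : ℝ) (hM₁ : 0 < M₁) (hM₂ : 0 ≤ M₂) (hκ : 0 ≤ κ)
    (z : Fin n → ℝ) (hz : z ≠ 0)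
    (s : ℝ) (hs : s = Real.sqrt (z ⬝ᵥ z))
    (zhat : Fin n → ℝ) (hzhat : zhat = s⁻¹ • z)
    (υ' υ'' : ℝ)
    (A : Matrix (Fin n) (Fin n) ℝ)
    (hA : A = M₁ • ((υ' / s) • (1 : Matrix (Fin n) (Fin n) ℝ) +
      (υ'' - υ' / s) • Matrix.vecMulVec zhat zhat))
    (X Y : Matrix (Fin n) (Fin n) ℝ) (hX : X.IsSymm) (hY : Y.IsSymm)
    (hXY : ∀ v w : Fin n → ℝ,
      (X *ᵥ v) ⬝ᵥ v - (Y *ᵥ w) ⬝ᵥ w ≤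
        (A *ᵥ (v - w)) ⬝ᵥ (v - w) + (2 * M₂ + κ) * (v ⬝ᵥ v + w ⬝ᵥ w)) :
    (∀ h : (X - Y).IsHermitian, ∀ i, h.eigenvalues i ≤ 4 * M₂ + 2 * κ) ∧
    (((X - Y) *ᵥ zhat) ⬝ᵥ zhat ≤ 4 * M₁ * υ'' + 4 * M₂ + 2 * κ) ∧
    (∀ h : (X - Y).IsHermitian, ∃ i, h.eigenvalues i ≤ 4 * M₁ * υ'' + 4 * M₂ + 2 * κ) ∧
    (4 * M₁ * υ'' + 4 * M₂ + 2 * κ ≤ 0 →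
      ∀ h : (X - Y).IsHermitian,
        pucciPlus lam Lam (X - Y) h ≤
          2 * (lam + Lam * ((n : ℝ) - 1)) * (2 * M₂ + κ) + 4 * lam * M₁ * υ'') := by
  classical
  haveI : NeZero n := ⟨by omega⟩
  have hzz : 0 < z ⬝ᵥ z := by
    rcases lt_or_eq_of_le (Finset.sum_nonneg fun i _ => mul_self_nonneg (z i)) with h | h
    · exact h
    · exact absurd (dotProduct_self_eq_zero.mp h.symm) hz
  have hs0 : 0 < s := by rw [hs]; exact Real.sqrt_pos.mpr hzz
  have hs2 : z ⬝ᵥ z = s ^ 2 := by rw [hs, Real.sq_sqrt hzz.le]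
  have hzhat1 : zhat ⬝ᵥ zhat = 1 := by
    rw [hzhat, smul_dotProduct, dotProduct_smul, smul_eq_mul, smul_eq_mul, hs2]
    field_simp
  have key1 : ∀ v : Fin n → ℝ, ((X - Y) *ᵥ v) ⬝ᵥ v ≤ (2 * (2 * M₂ + κ)) * (v ⬝ᵥ v) := by
    intro v
    have h := hXY v v
    rw [sub_self, Matrix.mulVec_zero, zero_dotProduct] at h
    rw [Matrix.sub_mulVec, sub_dotProduct]
    linarith
  have part1 : ∀ h : (X - Y).IsHermitian, ∀ i, h.eigenvalues i ≤ 4 * M₂ + 2 * κ := by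
    intro h i
    obtain ⟨v, hv1, hv2⟩ := eigen_rayleigh (X - Y) h i
    rw [hv2]
    calc ((X - Y) *ᵥ v) ⬝ᵥ v ≤ (2 * (2 * M₂ + κ)) * (v ⬝ᵥ v) := key1 v
      _ = 4 * M₂ + 2 * κ := by rw [hv1]; ring
  have hAz : (A *ᵥ zhat) ⬝ᵥ zhat = M₁ * υ'' := by
    rw [hA, Matrix.smul_mulVec, Matrix.add_mulVec, Matrix.smul_mulVec,
      Matrix.smul_mulVec, Matrix.one_mulVec, vecMulVec_mulVec', hzhat1, one_smul,
      smul_dotProduct, add_dotProduct, smul_dotProduct,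
      smul_dotProduct, hzhat1]
    simp only [smul_eq_mul]
    ring
  have part2 : ((X - Y) *ᵥ zhat) ⬝ᵥ zhat ≤ 4 * M₁ * υ'' + 4 * M₂ + 2 * κ := by
    have h := hXY zhat (-zhat)
    have hsub : zhat - -zhat = (2 : ℝ) • zhat := by
      rw [sub_neg_eq_add, two_smul]
    rw [hsub, Matrix.mulVec_smul, smul_dotProduct, dotProduct_smul,
      Matrix.mulVec_neg, neg_dotProduct, dotProduct_neg, neg_neg,
      neg_dotProduct, dotProduct_neg, neg_neg, hzhat1] at h
    rw [Matrix.sub_mulVec, sub_dotProduct]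
    rw [smul_eq_mul, smul_eq_mul, hAz] at h
    linarith
  have part3 : ∀ h : (X - Y).IsHermitian,
      ∃ i, h.eigenvalues i ≤ 4 * M₁ * υ'' + 4 * M₂ + 2 * κ := by
    intro h
    obtain ⟨i, hi⟩ := rayleigh_eigen_le (X - Y) h zhat hzhat1
    exact ⟨i, hi.trans part2⟩
  refine ⟨part1, part2, part3, ?_⟩
  intro hneg h
  obtain ⟨i₀, hi₀⟩ := part3 h
  have hc0 : (0 : ℝ) ≤ 4 * M₂ + 2 * κ := by linarith
  have hmaxsum : ∑ i, max (h.eigenvalues i) 0 ≤ ((n : ℝ) - 1) * (4 * M₂ + 2 * κ) := by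
    rw [← Finset.add_sum_erase _ _ (Finset.mem_univ i₀),
      max_eq_right (hi₀.trans hneg), zero_add]
    calc ∑ i ∈ Finset.univ.erase i₀, max (h.eigenvalues i) 0
        ≤ (Finset.univ.erase i₀).card • (4 * M₂ + 2 * κ) :=
          Finset.sum_le_card_nsmul _ _ _ fun i _ => max_le (part1 h i) hc0
      _ = ((n : ℝ) - 1) * (4 * M₂ + 2 * κ) := by
          rw [Finset.card_erase_of_mem (Finset.mem_univ i₀), Finset.card_univ,
            Fintype.card_fin, nsmul_eq_mul, Nat.cast_sub (by omega), Nat.cast_one]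
  have hminsum : ∑ i, min (h.eigenvalues i) 0 ≤ 4 * M₁ * υ'' + 4 * M₂ + 2 * κ := by
    rw [← Finset.add_sum_erase _ _ (Finset.mem_univ i₀),
      min_eq_left (hi₀.trans hneg)]
    have h2 : ∑ i ∈ Finset.univ.erase i₀, min (h.eigenvalues i) 0 ≤ 0 :=
      Finset.sum_nonpos fun i _ => min_le_right _ _
    linarith
  have hLam0 : (0 : ℝ) ≤ Lam := hlam.le.trans hlamLam
  show Lam * ∑ i, max (h.eigenvalues i) 0 + lam * ∑ i, min (h.eigenvalues i) 0 ≤ _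
  calc Lam * ∑ i, max (h.eigenvalues i) 0 + lam * ∑ i, min (h.eigenvalues i) 0
      ≤ Lam * (((n : ℝ) - 1) * (4 * M₂ + 2 * κ)) +
        lam * (4 * M₁ * υ'' + 4 * M₂ + 2 * κ) :=
        add_le_add (mul_le_mul_of_nonneg_left hmaxsum hLam0)
          (mul_le_mul_of_nonneg_left hminsum hlam.le)
    _ = 2 * (lam + Lam * ((n : ℝ) - 1)) * (2 * M₂ + κ) + 4 * lam * M₁ * υ'' := by ring
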